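/- Let E be a directed graph and c a cycle without exits in E. For any finite paths α, β with r(α) = s(c^m) and r(β) = s(c^n) for positive integers m, n, the product (α c^m α*)(β c^n β*) in the Leavitt path algebra L_R(E) equals α c^{m+n} α* if α = β (so m-cycle and n-cycle share the same base), and equals 0 if α ≠ β and α, β both lie in F_E(c^0) ∪ {s(c)} with neither extending the other through the cycle. -/

import Mathlib

/-- A directed graph: vertices, edges, source and range maps. -/
structure LGraph where
  V : Type
  E : Type
  s : E → V
  r : E → V

/-- A walk: a candidate finite path, given by a source vertex and a list of edges. -/
structure Walk (G : LGraph) where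
  src : G.V
  edges : List G.E

/-- The range (final vertex) of a walk. -/
def Walk.rng {G : LGraph} (p : Walk G) : G.V :=
  match p.edges.getLast? with
  | none => p.src
  | some e => G.r e

/-- Appending two walks. -/
def Walk.append {G : LGraph} (p q : Walk G) : Walk G := ⟨p.src, p.edges ++ q.edges⟩

/-- The `n`-fold power of a walk (concatenation with itself). -/
def Walk.pow {G : LGraph} (c : Walk G) (n : ℕ) : Walk G :=
  ⟨c.src, (List.replicate n c.edges).flatten⟩

namespace LGraph
variable (G : LGraph)

/-- A walk is a genuine finite path: the first edge starts at the source and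
consecutive edges match up. -/
def IsPath (p : Walk G) : Prop :=
  (∀ e, p.edges.head? = some e → G.s e = p.src) ∧
    p.edges.Chain' (fun a b => G.r a = G.s b)

/-- A subset of vertices is hereditary. -/
def Hereditary (H : Set G.V) : Prop :=
  ∀ p : Walk G, G.IsPath p → p.src ∈ H → p.rng ∈ H

/-- A regular vertex: emits at least one and finitely many edges. -/
def Regular (v : G.V) : Prop :=
  {e | G.s e = v}.Finite ∧ {e | G.s e = v}.Nonempty

/-- A subset of vertices is saturated. -/
def Saturated (H : Set G.V) : Prop :=
  ∀ v, G.Regular v → (∀ e, G.s e = v → G.r e ∈ H) → v ∈ H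

/-- The saturated closure: the smallest hereditary and saturated set containing `H`. -/
def satClosure (H : Set G.V) : Set G.V :=
  ⋂₀ {K | H ⊆ K ∧ G.Hereditary K ∧ G.Saturated K}

/-- The set of vertices of a walk (sources of its edges). -/
def verts (c : Walk G) : Set G.V := {v | ∃ e ∈ c.edges, G.s e = v}

/-- A cycle: a nontrivial closed path with no repeated vertices except the base. -/
def IsCycle (c : Walk G) : Prop :=
  G.IsPath c ∧ c.edges ≠ [] ∧ c.rng = c.src ∧ (c.edges.map G.s).Nodup

/-- A cycle (or walk) has no exits: each vertex on it emits only the edge of the walk. -/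
def NoExits (c : Walk G) : Prop :=
  ∀ e ∈ c.edges, ∀ e', G.s e' = G.s e → e' = e

/-- `F_E(H)`: paths reaching `H` exactly at their final vertex. -/
def FE (H : Set G.V) : Set (Walk G) :=
  {α | G.IsPath α ∧ α.edges ≠ [] ∧ α.src ∉ H ∧
       (∀ e ∈ α.edges.dropLast, G.r e ∉ H) ∧ α.rng ∈ H}

/-- The breaking vertices of `H`. -/
def BH (H : Set G.V) : Set G.V :=
  {v | v ∉ H ∧ {e | G.s e = v}.Infinite ∧
       {e | G.s e = v ∧ G.r e ∉ H}.Nonempty ∧ {e | G.s e = v ∧ G.r e ∉ H}.Finite}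

/-- `F_E'(H)`: members of `F_E(H)` whose last edge has source not a breaking vertex. -/
def FE' (H : Set G.V) : Set (Walk G) :=
  {α | α ∈ G.FE H ∧ ∀ e, α.edges.getLast? = some e → G.s e ∉ G.BH H}

/-- Condition (F): `H ∪ F_E'(H) ∪ {α ∈ Path(E) : r(α) ∈ B_H}` is finite. -/
def ConditionF (H : Set G.V) : Prop :=
  H.Finite ∧ (G.FE' H).Finite ∧ {α : Walk G | G.IsPath α ∧ α.rng ∈ G.BH H}.Finite

/-- An infinite path, given by its sequence of edges. -/
def IsInfPath (x : ℕ → G.E) : Prop := ∀ i, G.r (x i) = G.s (x (i + 1))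

/-- The edge sequence of the concatenation of a finite walk with an infinite edge sequence. -/
def concatSeq (p : Walk G) (x : ℕ → G.E) : ℕ → G.E := fun n =>
  if h : n < p.edges.length then p.edges.get ⟨n, h⟩ else x (n - p.edges.length)

end LGraph

/-- Generators of the Leavitt path algebra: vertices, edges, and ghost edges. -/
inductive LGen (G : LGraph) : Type
  | vert : G.V → LGen G
  | edge : G.E → LGen G
  | ghost : G.E → LGen G

/-- The defining relations (V), (E1), (E2), (CK1), (CK2) of the Leavitt path algebra. -/
inductive LeavittRel (R : Type) [CommRing R] (G : LGraph) :
    FreeAlgebra R (LGen G) → FreeAlgebra R (LGen G) → Prop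
  | v_same (v : G.V) : LeavittRel R G
      (FreeAlgebra.ι R (LGen.vert v) * FreeAlgebra.ι R (LGen.vert v))
      (FreeAlgebra.ι R (LGen.vert v))
  | v_diff (v w : G.V) (h : v ≠ w) : LeavittRel R G
      (FreeAlgebra.ι R (LGen.vert v) * FreeAlgebra.ι R (LGen.vert w)) 0
  | e1_left (e : G.E) : LeavittRel R G
      (FreeAlgebra.ι R (LGen.vert (G.s e)) * FreeAlgebra.ι R (LGen.edge e))
      (FreeAlgebra.ι R (LGen.edge e))
  | e1_right (e : G.E) : LeavittRel R G
      (FreeAlgebra.ι R (LGen.edge e) * FreeAlgebra.ι R (LGen.vert (G.r e)))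
      (FreeAlgebra.ι R (LGen.edge e))
  | e2_left (e : G.E) : LeavittRel R G
      (FreeAlgebra.ι R (LGen.vert (G.r e)) * FreeAlgebra.ι R (LGen.ghost e))
      (FreeAlgebra.ι R (LGen.ghost e))
  | e2_right (e : G.E) : LeavittRel R G
      (FreeAlgebra.ι R (LGen.ghost e) * FreeAlgebra.ι R (LGen.vert (G.s e)))
      (FreeAlgebra.ι R (LGen.ghost e))
  | ck1_same (e : G.E) : LeavittRel R G
      (FreeAlgebra.ι R (LGen.ghost e) * FreeAlgebra.ι R (LGen.edge e))
      (FreeAlgebra.ι R (LGen.vert (G.r e)))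
  | ck1_diff (e f : G.E) (h : e ≠ f) : LeavittRel R G
      (FreeAlgebra.ι R (LGen.ghost e) * FreeAlgebra.ι R (LGen.edge f)) 0
  | ck2 (v : G.V) (hf : {e | G.s e = v}.Finite) (hn : {e | G.s e = v}.Nonempty) :
      LeavittRel R G (FreeAlgebra.ι R (LGen.vert v))
        (∑ e ∈ hf.toFinset, FreeAlgebra.ι R (LGen.edge e) * FreeAlgebra.ι R (LGen.ghost e))

/-- The Leavitt path algebra `L_R(E)`. -/
abbrev Leavitt (R : Type) [CommRing R] (G : LGraph) : Type := RingQuot (LeavittRel R G)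

variable (R : Type) [CommRing R] (G : LGraph)

/-- The vertex idempotent `v ∈ L_R(E)`. -/
def lv (v : G.V) : Leavitt R G :=
  RingQuot.mkRingHom (LeavittRel R G) (FreeAlgebra.ι R (LGen.vert v))

/-- The edge element `e ∈ L_R(E)`. -/
def le (e : G.E) : Leavitt R G :=
  RingQuot.mkRingHom (LeavittRel R G) (FreeAlgebra.ι R (LGen.edge e))

/-- The ghost edge element `e* ∈ L_R(E)`. -/
def lg (e : G.E) : Leavitt R G :=
  RingQuot.mkRingHom (LeavittRel R G) (FreeAlgebra.ι R (LGen.ghost e))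

/-- The element `α ∈ L_R(E)` associated to a path `α`. -/
def lpath (α : Walk G) : Leavitt R G :=
  lv R G α.src * (α.edges.map (le R G)).prod

/-- The ghost element `α* ∈ L_R(E)` associated to a path `α`. -/
def lstar (α : Walk G) : Leavitt R G :=
  (α.edges.reverse.map (lg R G)).prod * lv R G α.src


namespace LpaAux

variable (R : Type) [CommRing R] (G : LGraph)

/-- Product of edge elements of a list. -/
def prodle (l : List G.E) : Leavitt R G := (l.map (le R G)).prod

/-- Product of ghost edge elements of a reversed list. -/
def gstar (l : List G.E) : Leavitt R G := (l.reverse.map (lg R G)).prod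

@[simp] lemma prodle_nil : prodle R G [] = 1 := rfl

@[simp] lemma prodle_cons (a : G.E) (l : List G.E) :
    prodle R G (a :: l) = le R G a * prodle R G l := by
  simp [prodle]

@[simp] lemma prodle_append (l₁ l₂ : List G.E) :
    prodle R G (l₁ ++ l₂) = prodle R G l₁ * prodle R G l₂ := by
  simp [prodle]

@[simp] lemma gstar_nil : gstar R G [] = 1 := rfl

@[simp] lemma gstar_cons (a : G.E) (l : List G.E) :
    gstar R G (a :: l) = gstar R G l * lg R G a := by
  simp [gstar]

lemma lrel {x y : FreeAlgebra R (LGen G)} (h : LeavittRel R G x y) :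
    RingQuot.mkRingHom (LeavittRel R G) x = RingQuot.mkRingHom (LeavittRel R G) y :=
  RingQuot.mkRingHom_rel h

lemma lv_mul_lv_self (v : G.V) : lv R G v * lv R G v = lv R G v := by
  rw [lv, ← map_mul]; exact lrel R G (LeavittRel.v_same v)

lemma lv_mul_lv_ne {v w : G.V} (h : v ≠ w) : lv R G v * lv R G w = 0 := by
  rw [lv, lv, ← map_mul]
  rw [lrel R G (LeavittRel.v_diff v w h)]; exact map_zero _

lemma lv_mul_le (e : G.E) : lv R G (G.s e) * le R G e = le R G e := by
  rw [lv, le, ← map_mul]; exact lrel R G (LeavittRel.e1_left e)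

lemma le_mul_lv (e : G.E) : le R G e * lv R G (G.r e) = le R G e := by
  rw [lv, le, ← map_mul]; exact lrel R G (LeavittRel.e1_right e)

lemma lg_mul_le_same (e : G.E) : lg R G e * le R G e = lv R G (G.r e) := by
  rw [lv, le, lg, ← map_mul]; exact lrel R G (LeavittRel.ck1_same e)

lemma lg_mul_le_ne {e f : G.E} (h : e ≠ f) : lg R G e * le R G f = 0 := by
  rw [le, lg, ← map_mul]
  rw [lrel R G (LeavittRel.ck1_diff e f h)]; exact map_zero _

lemma lpath_eq (p : Walk G) : lpath R G p = lv R G p.src * prodle R G p.edges := rfl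

lemma lstar_eq (p : Walk G) : lstar R G p = gstar R G p.edges * lv R G p.src := rfl

lemma rng_nil (v : G.V) : Walk.rng (⟨v, []⟩ : Walk G) = v := rfl

lemma rng_eq_getLast (p : Walk G) (h : p.edges ≠ []) :
    p.rng = G.r (p.edges.getLast h) := by
  rw [Walk.rng, List.getLast?_eq_getLast h]

lemma rng_cons (v : G.V) (a : G.E) (l : List G.E) :
    Walk.rng (⟨v, a :: l⟩ : Walk G) = Walk.rng (⟨G.r a, l⟩ : Walk G) := by
  cases l with
  | nil => rfl
  | cons b l =>
    simp only [Walk.rng, List.getLast?_cons_cons]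
    cases hl : (b :: l).getLast? with
    | none => exact absurd (List.getLast?_eq_none_iff.mp hl) (List.cons_ne_nil b l)
    | some e => rfl

lemma prodle_mul_rng (l : List G.E) (hch : l.Chain' (fun a b => G.r a = G.s b)) :
    ∀ (hne : l ≠ []), prodle R G l * lv R G (G.r (l.getLast hne)) = prodle R G l := by
  induction l with
  | nil => intro h; exact absurd rfl h
  | cons a l ih =>
    intro _
    cases l with
    | nil => simp [le_mul_lv]
    | cons b l' =>
      rw [List.getLast_cons (List.cons_ne_nil b l'), prodle_cons, mul_assoc,
        ih hch.tail (List.cons_ne_nil b l')]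

lemma gstar_lv_prodle (l : List G.E) :
    ∀ (v : G.V), l.Chain' (fun a b => G.r a = G.s b) →
    (∀ e, l.head? = some e → G.s e = v) →
    gstar R G l * (lv R G v * prodle R G l) = lv R G (Walk.rng (⟨v, l⟩ : Walk G)) := by
  induction l with
  | nil => intro v _ _; simp [rng_nil, lv_mul_lv_self]
  | cons a l ih =>
    intro v hch hhd
    have hv : G.s a = v := hhd a rfl
    rw [gstar_cons, prodle_cons, ← hv, ← mul_assoc (lv R G (G.s a)), lv_mul_le,
      mul_assoc, ← mul_assoc (lg R G a), lg_mul_le_same, rng_cons]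
    exact ih (G.r a) hch.tail (by
      intro e he
      cases l with
      | nil => simp at he
      | cons b l' =>
        simp only [List.head?_cons, Option.some.injEq] at he
        subst he
        exact (List.isChain_cons_cons.mp hch).1.symm)

lemma gstar_mul_prodle_zero (as : List G.E) :
    ∀ (bs : List G.E), as.Chain' (fun a b => G.r a = G.s b) →
    bs.Chain' (fun a b => G.r a = G.s b) →
    ¬ as <+: bs → ¬ bs <+: as → gstar R G as * prodle R G bs = 0 := by
  induction as with
  | nil => intro bs _ _ hab _; exact absurd (List.nil_prefix) hab
  | cons a as ih =>
    intro bs hca hcb hab hba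
    cases bs with
    | nil => exact absurd (List.nil_prefix) hba
    | cons b bs =>
      by_cases heq : a = b
      · subst heq
        rw [List.cons_prefix_cons] at hab hba
        have h1 : ¬ as <+: bs := fun h => hab ⟨rfl, h⟩
        have h2 : ¬ bs <+: as := fun h => hba ⟨rfl, h⟩
        cases bs with
        | nil => exact absurd (List.nil_prefix) h2
        | cons b' bs' =>
          have hs : G.r a = G.s b' := (List.isChain_cons_cons.mp hcb).1
          rw [gstar_cons, prodle_cons, mul_assoc,
            ← mul_assoc (lg R G a) (le R G a), lg_mul_le_same, hs]
          rw [prodle_cons, ← mul_assoc (lv R G (G.s b')) (le R G b'), lv_mul_le,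
            ← prodle_cons]
          exact ih (b' :: bs') hca.tail hcb.tail h1 h2
      · rw [gstar_cons, prodle_cons, mul_assoc, ← mul_assoc (lg R G a),
          lg_mul_le_ne R G heq]
        simp

lemma lstar_mul_lpath (p : Walk G) (hp : G.IsPath p) :
    lstar R G p * lpath R G p = lv R G p.rng := by
  rw [lstar_eq, lpath_eq, mul_assoc, ← mul_assoc (lv R G p.src), lv_mul_lv_self]
  exact gstar_lv_prodle R G p.edges p.src hp.2 hp.1

lemma lpath_mul_lv_rng (p : Walk G) (hp : G.IsPath p) :
    lpath R G p * lv R G p.rng = lpath R G p := by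
  rcases eq_or_ne p.edges [] with h | h
  · rw [lpath_eq, h]
    have : p.rng = p.src := by rw [Walk.rng, h]; rfl
    simp [this, lv_mul_lv_self]
  · rw [lpath_eq, rng_eq_getLast G p h, mul_assoc, prodle_mul_rng R G p.edges hp.2 h]

lemma lpath_mul_lpath (p q : Walk G) (hp : G.IsPath p) (h : p.rng = q.src) :
    lpath R G p * lpath R G q = lpath R G (p.append q) := by
  have h1 : lpath R G p * lv R G q.src = lpath R G p := by
    rw [← h]; exact lpath_mul_lv_rng R G p hp
  rw [lpath_eq R G q, ← mul_assoc, h1, lpath_eq, lpath_eq, Walk.append, mul_assoc,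
    ← prodle_append]

lemma pow_succ_walk (c : Walk G) (m : ℕ) :
    c.pow (m + 1) = Walk.append c (c.pow m) := by
  simp [Walk.pow, Walk.append, List.replicate_succ]

lemma pow_zero_walk (c : Walk G) : c.pow 0 = (⟨c.src, []⟩ : Walk G) := by
  simp [Walk.pow]

lemma append_src (p q : Walk G) : (p.append q).src = p.src := rfl

lemma rng_some {p : Walk G} {e : G.E} (h : p.edges.getLast? = some e) :
    p.rng = G.r e := by
  rw [Walk.rng, h]

lemma append_rng (p q : Walk G) (h : q.edges ≠ []) : (p.append q).rng = q.rng := by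
  have h1 : (p.append q).edges.getLast? = some (q.edges.getLast h) := by
    show (p.edges ++ q.edges).getLast? = _
    rw [List.getLast?_append_of_ne_nil _ h]
    exact List.getLast?_eq_getLast h
  rw [rng_some G h1, rng_eq_getLast G q h]

lemma append_rng_nil (p q : Walk G) (h : q.edges = []) (h2 : p.rng = q.src) :
    (p.append q).rng = q.rng := by
  have h3 : p.append q = p := by cases p; simp [Walk.append, h]
  have hq : q.rng = q.src := by rw [Walk.rng, h]; rfl
  rw [h3, h2, hq]

lemma isPath_append (p q : Walk G) (hp : G.IsPath p) (hq : G.IsPath q)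
    (h : p.rng = q.src) : G.IsPath (p.append q) := by
  constructor
  · intro e he
    rw [Walk.append] at he ⊢
    simp only at he ⊢
    cases hpe : p.edges with
    | nil =>
      rw [hpe, List.nil_append] at he
      have : p.rng = p.src := by rw [Walk.rng, hpe]; rfl
      rw [hq.1 e he, ← h, this]
    | cons a l =>
      rw [hpe] at he
      simp only [List.cons_append, List.head?_cons, Option.some.injEq] at he
      subst he
      exact hp.1 _ (by simp [hpe])
  · rw [Walk.append]
    simp only
    refine List.isChain_append.mpr ?_
    refine ⟨hp.2, hq.2, ?_⟩
    intro x hx y hy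
    have hx' : p.rng = G.r x := rng_some G (Option.mem_def.mp hx)
    have hy' : G.s y = q.src := hq.1 y (Option.mem_def.mp hy)
    rw [← hx', h, hy']

lemma pow_isPath (c : Walk G) (hc : G.IsCycle c) (m : ℕ) : G.IsPath (c.pow m) := by
  induction m with
  | zero =>
    rw [pow_zero_walk]
    exact ⟨fun e he => by simp at he, List.IsChain.nil⟩
  | succ k ih =>
    rw [pow_succ_walk]
    exact isPath_append G c (c.pow k) hc.1 ih (by rw [hc.2.2.1]; rfl)

lemma pow_rng (c : Walk G) (hc : G.IsCycle c) (m : ℕ) (hm : 0 < m) :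
    (c.pow m).rng = c.src := by
  induction m with
  | zero => exact absurd hm (by simp)
  | succ k ih =>
    rw [pow_succ_walk]
    rcases Nat.eq_zero_or_pos k with hk | hk
    · subst hk
      rw [append_rng_nil G c (c.pow 0) (by simp [Walk.pow]) (by rw [hc.2.2.1]; rfl)]
      rw [pow_zero_walk]; rfl
    · rw [append_rng G c (c.pow k) ?_, ih hk]
      have h1 : c.edges ≠ [] := hc.2.1
      show (List.replicate k c.edges).flatten ≠ []
      cases k with
      | zero => exact absurd hk (lt_irrefl 0)
      | succ k' =>
        rw [List.replicate_succ, List.flatten_cons]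
        intro hcon
        exact h1 (List.append_eq_nil_iff.mp hcon).1

lemma pow_append_pow (c : Walk G) (m n : ℕ) :
    (c.pow m).append (c.pow n) = c.pow (m + n) := by
  rw [Walk.append, Walk.pow, Walk.pow, Walk.pow]
  congr 1
  rw [List.replicate_add, List.flatten_append]

end LpaAux

/-- for a cycle without exits `c` and paths `α, β` ending at the base of
`c`, one has `(αc^mα*)(βc^nβ*) = αc^{m+n}α*` when `α = β`, and the product is `0` when
`α ≠ β` with `α, β ∈ F_E(c⁰) ∪ {s(c)}`. -/
theorem cycle_products (R : Type) [CommRing R] (G : LGraph) (c α β : Walk G)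
    (hc : G.IsCycle c) (hce : G.NoExits c)
    (hα : G.IsPath α) (hβ : G.IsPath β)
    (hra : α.rng = c.src) (hrb : β.rng = c.src)
    (m n : ℕ) (hm : 0 < m) (hn : 0 < n) :
    (α = β →
        lpath R G α * lpath R G (c.pow m) * lstar R G α *
            (lpath R G β * lpath R G (c.pow n) * lstar R G β) =
          lpath R G α * lpath R G (c.pow (m + n)) * lstar R G α) ∧
      (α ≠ β → α ∈ insert (⟨c.src, []⟩ : Walk G) (G.FE (G.verts c)) →
        β ∈ insert (⟨c.src, []⟩ : Walk G) (G.FE (G.verts c)) →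
        lpath R G α * lpath R G (c.pow m) * lstar R G α *
            (lpath R G β * lpath R G (c.pow n) * lstar R G β) = 0) := by
  classical
  have hcp : G.IsPath c := hc.1
  have hcne : c.edges ≠ [] := hc.2.1
  have hpowP : ∀ k, G.IsPath (c.pow k) := LpaAux.pow_isPath G c hc
  have hpowR : ∀ k, 0 < k → (c.pow k).rng = c.src := LpaAux.pow_rng G c hc
  constructor
  · -- equal case
    rintro rfl
    have h1 : lstar R G α * lpath R G α = lv R G c.src := by
      rw [LpaAux.lstar_mul_lpath R G α hα, hra]
    have h2 : lpath R G (c.pow m) * lv R G c.src = lpath R G (c.pow m) := by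
      have := LpaAux.lpath_mul_lv_rng R G (c.pow m) (hpowP m)
      rwa [hpowR m hm] at this
    have h3 : lpath R G (c.pow m) * lpath R G (c.pow n) = lpath R G (c.pow (m + n)) := by
      rw [LpaAux.lpath_mul_lpath R G (c.pow m) (c.pow n) (hpowP m)
        (by rw [hpowR m hm]; rfl), LpaAux.pow_append_pow]
    calc lpath R G α * lpath R G (c.pow m) * lstar R G α *
          (lpath R G α * lpath R G (c.pow n) * lstar R G α)
        = lpath R G α * ((lpath R G (c.pow m) * (lstar R G α * lpath R G α)) *
            lpath R G (c.pow n)) * lstar R G α := by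
          simp only [mul_assoc]
      _ = lpath R G α * lpath R G (c.pow (m + n)) * lstar R G α := by
          rw [h1, h2, h3]
  · -- distinct case
    intro hne hαm hβm
    set H := G.verts c with hH
    have hsrcH : c.src ∈ H := by
      cases hce' : c.edges with
      | nil => exact absurd hce' hcne
      | cons a l =>
        refine ⟨a, by rw [hce']; exact List.mem_cons_self, ?_⟩
        exact hcp.1 a (by rw [hce']; rfl)
    -- key: lstar α * lpath β = 0
    have hkey : lstar R G α * lpath R G β = 0 := by
      rw [LpaAux.lstar_eq, LpaAux.lpath_eq]
      rcases eq_or_ne α.src β.src with hsrc | hsrc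
      · -- same source
        -- rule out trivial walks
        have hαFE : α ∈ G.FE H := by
          rcases hαm with h | h
          · exfalso
            rcases hβm with h' | h'
            · exact hne (h.trans h'.symm)
            · exact h'.2.2.1 (by rw [← hsrc, h]; exact hsrcH)
          · exact h
        have hβFE : β ∈ G.FE H := by
          rcases hβm with h | h
          · exact absurd (by rw [hsrc, h]; exact hsrcH) hαFE.2.2.1
          · exact h
        have hane : α.edges ≠ [] := hαFE.2.1
        have hbne : β.edges ≠ [] := hβFE.2.1
        -- neither edge list is a prefix of the other
        have hnab : ¬ α.edges <+: β.edges := by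
          intro hpre
          obtain ⟨cs, hcs⟩ := hpre
          rcases eq_or_ne cs [] with hcs0 | hcs0
          · apply hne
            cases α; cases β
            simp only at hsrc hcs ⊢
            rw [hcs0, List.append_nil] at hcs
            simp [hsrc, hcs]
          · have hmem : α.edges.getLast hane ∈ β.edges.dropLast := by
              rw [← hcs, List.dropLast_append_of_ne_nil hcs0]
              exact List.mem_append_left _ (List.getLast_mem hane)
            exact hβFE.2.2.2.1 _ hmem
              (by rw [← LpaAux.rng_eq_getLast G α hane, hra]; exact hsrcH)
        have hnba : ¬ β.edges <+: α.edges := by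
          intro hpre
          obtain ⟨cs, hcs⟩ := hpre
          rcases eq_or_ne cs [] with hcs0 | hcs0
          · apply hne
            cases α; cases β
            simp only at hsrc hcs ⊢
            rw [hcs0, List.append_nil] at hcs
            simp [hsrc, hcs]
          · have hmem : β.edges.getLast hbne ∈ α.edges.dropLast := by
              rw [← hcs, List.dropLast_append_of_ne_nil hcs0]
              exact List.mem_append_left _ (List.getLast_mem hbne)
            exact hαFE.2.2.2.1 _ hmem
              (by rw [← LpaAux.rng_eq_getLast G β hbne, hrb]; exact hsrcH)
        -- absorb the middle vertex idempotents
        have habs : lv R G α.src * (lv R G β.src * LpaAux.prodle R G β.edges) =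
            LpaAux.prodle R G β.edges := by
          rw [← hsrc, ← mul_assoc, LpaAux.lv_mul_lv_self]
          cases hbe : β.edges with
          | nil => exact absurd hbe hbne
          | cons b l =>
            rw [LpaAux.prodle_cons, ← mul_assoc]
            have : G.s b = α.src := by rw [hsrc]; exact hβ.1 b (by rw [hbe]; rfl)
            rw [← this, LpaAux.lv_mul_le]
        rw [mul_assoc, habs]
        exact LpaAux.gstar_mul_prodle_zero R G α.edges β.edges hα.2 hβ.2 hnab hnba
      · -- different sources
        rw [mul_assoc, ← mul_assoc (lv R G α.src), LpaAux.lv_mul_lv_ne R G hsrc]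
        simp
    calc lpath R G α * lpath R G (c.pow m) * lstar R G α *
          (lpath R G β * lpath R G (c.pow n) * lstar R G β)
        = lpath R G α * lpath R G (c.pow m) * ((lstar R G α * lpath R G β) *
            (lpath R G (c.pow n) * lstar R G β)) := by simp only [mul_assoc]
      _ = 0 := by rw [hkey]; simp
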